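/- arXiv:1701.00407 — 4 statements merged into one kernel-verified Lean document; each statement's English description precedes it below -/
import Mathlib

section
/- In the ring A = ℤ[√5], the polynomial H = x² + √5 x + 1 is irreducible over A, even though its leading coefficient and discriminant both equal 1. -/
open Polynomial

lemma mem_repr (x : ℝ) (hx : x ∈ Subring.closure ({Real.sqrt 5} : Set ℝ)) :
    ∃ a b : ℤ, x = a + b * Real.sqrt 5 := by
  have h5 : Real.sqrt 5 * Real.sqrt 5 = 5 := Real.mul_self_sqrt (by norm_num)
  induction hx using Subring.closure_induction with
  | mem x hx => exact ⟨0, 1, by simp [Set.mem_singleton_iff.mp hx]⟩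
  | zero => exact ⟨0, 0, by simp⟩
  | one => exact ⟨1, 0, by simp⟩
  | add x y _ _ hx hy =>
      obtain ⟨a, b, rfl⟩ := hx; obtain ⟨c, d, rfl⟩ := hy
      exact ⟨a + c, b + d, by push_cast; ring⟩
  | neg x _ hx =>
      obtain ⟨a, b, rfl⟩ := hx
      exact ⟨-a, -b, by push_cast; ring⟩
  | mul x y _ _ hx hy =>
      obtain ⟨a, b, rfl⟩ := hx; obtain ⟨c, d, rfl⟩ := hy
      refine ⟨a * c + 5 * b * d, a * d + b * c, by push_cast; linear_combination (b : ℝ) * (d : ℝ) * h5⟩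

lemma repr_eq (a b c d : ℤ) (h : (a : ℝ) + b * Real.sqrt 5 = c + d * Real.sqrt 5) :
    a = c ∧ b = d := by
  have h5 : Irrational (Real.sqrt 5) := by
    have : Irrational (Real.sqrt (5 : ℕ)) := (by norm_num : Nat.Prime 5).irrational_sqrt
    simpa using this
  by_cases hbd : b = d
  · subst hbd
    constructor
    · exact_mod_cast add_right_cancel h
    · rfl
  · exfalso
    have hne : ((d : ℝ) - b) ≠ 0 := by
      intro h0
      apply hbd
      have : (b : ℝ) = d := by linarith
      exact_mod_cast this
    have : Real.sqrt 5 = ((a - c : ℤ) : ℝ) / ((d - b : ℤ) : ℝ) := by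
      push_cast
      field_simp
      linarith
    apply h5
    exact ⟨((a - c : ℤ) : ℚ) / ((d - b : ℤ) : ℚ), by rw [this]; push_cast; ring⟩

/-- In the ring `A = ℤ[√5]` (the subring of `ℝ` generated by `√5`), the polynomial
`H = x² + √5·x + 1` has leading coefficient `1` and discriminant `(√5)² - 4·1·1 = 1`,
yet `H` is irreducible over `A`. -/
theorem stmt_4 (s : Subring.closure ({Real.sqrt 5} : Set ℝ))
    (hs : (s : ℝ) = Real.sqrt 5) :
    (X ^ 2 + C s * X + 1 : Polynomial (Subring.closure ({Real.sqrt 5} : Set ℝ))).leadingCoeff = 1 ∧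
    s ^ 2 - 4 * 1 * 1 = 1 ∧
    Irreducible (X ^ 2 + C s * X + 1 :
      Polynomial (Subring.closure ({Real.sqrt 5} : Set ℝ))) := by
  have h5 : Real.sqrt 5 * Real.sqrt 5 = 5 := Real.mul_self_sqrt (by norm_num)
  have hmonic : (X ^ 2 + C s * X + 1 :
      Polynomial (Subring.closure ({Real.sqrt 5} : Set ℝ))).Monic := by
    monicity!
  have hdeg : (X ^ 2 + C s * X + 1 :
      Polynomial (Subring.closure ({Real.sqrt 5} : Set ℝ))).natDegree = 2 := by
    compute_degree!
  refine ⟨hmonic, ?_, ?_⟩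
  · apply Subtype.ext
    have h4 : ((4 : Subring.closure ({Real.sqrt 5} : Set ℝ)) : ℝ) = 4 := rfl
    push_cast [h4]
    rw [hs, sq, h5]
    norm_num
  · by_contra hirr
    obtain ⟨c₁, c₂, h0, h1⟩ :=
      (hmonic.not_irreducible_iff_exists_add_mul_eq_coeff hdeg).mp hirr
    have hc0 : (1 : Subring.closure ({Real.sqrt 5} : Set ℝ)) = c₁ * c₂ := by
      simpa using h0
    have hc1 : s = c₁ + c₂ := by
      have := h1
      simp [coeff_one] at this
      simpa using this
    obtain ⟨a, b, hab⟩ := mem_repr (c₁ : ℝ) c₁.2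
    obtain ⟨c, d, hcd⟩ := mem_repr (c₂ : ℝ) c₂.2
    have hsum : (c₁ : ℝ) + c₂ = Real.sqrt 5 := by
      have h' : ((c₁ + c₂ : Subring.closure ({Real.sqrt 5} : Set ℝ)) : ℝ) = (s : ℝ) :=
        congrArg Subtype.val hc1.symm
      push_cast at h'
      rw [hs] at h'
      exact h'
    have hprod : (c₁ : ℝ) * c₂ = 1 := by
      exact_mod_cast congrArg (Subtype.val) hc0.symm
    rw [hab, hcd] at hsum hprod
    have e1 : ((a + c : ℤ) : ℝ) + ((b + d : ℤ) : ℝ) * Real.sqrt 5 = (0 : ℤ) + (1 : ℤ) * Real.sqrt 5 := by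
      push_cast; linarith
    obtain ⟨e1a, e1b⟩ := repr_eq _ _ _ _ e1
    have e2 : ((a * c + 5 * b * d : ℤ) : ℝ) + ((a * d + b * c : ℤ) : ℝ) * Real.sqrt 5
        = (1 : ℤ) + (0 : ℤ) * Real.sqrt 5 := by
      push_cast; linear_combination hprod - (b : ℝ) * (d : ℝ) * h5
    obtain ⟨e2a, e2b⟩ := repr_eq _ _ _ _ e2
    -- now integer arithmetic contradiction
    have hc' : c = -a := by omega
    have hd' : d = 1 - b := by omega
    subst hc' hd'
    have h1' : a * (1 - b) + b * (-a) = 0 := e2b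
    have h2' : a * (-a) + 5 * b * (1 - b) = 1 := e2a
    have ha : a * (1 - 2 * b) = 0 := by ring_nf; ring_nf at h1'; linarith
    rcases mul_eq_zero.mp ha with ha0 | hb0
    · subst ha0
      have : 5 * (b * (1 - b)) = 1 := by linarith
      omega
    · omega
end

section
/- Let D = { c₀ + c₁x + ⋯ + cₙxⁿ ∈ ℤ[x] : c₁ is even }, a subring of ℤ[x]. Then H = x² + 2x + 1 has discriminant 0 and leading coefficient 1, but H is not a square of any element of D. -/
open Polynomial

/-- Let `D` be the subring of `ℤ[x]` consisting of polynomials whose coefficient of `x`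
is even.  The polynomial `H = x² + 2x + 1` (which lies in `D`) has discriminant `0` and
leading coefficient `1`, but `H` is not the square of any element of `D`. -/
theorem stmt_5 :
    (2 : ℤ) ^ 2 - 4 * 1 * 1 = 0 ∧
    (X ^ 2 + 2 * X + 1 : ℤ[X]).leadingCoeff = 1 ∧
    Even ((X ^ 2 + 2 * X + 1 : ℤ[X]).coeff 1) ∧
    ¬ ∃ p : ℤ[X], Even (p.coeff 1) ∧ (X ^ 2 + 2 * X + 1 : ℤ[X]) = p ^ 2 := by
  refine ⟨by norm_num, ?_, ?_, ?_⟩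
  · have : (X ^ 2 + 2 * X + 1 : ℤ[X]) = (X + 1) ^ 2 := by ring
    rw [this]
    have hm : (X + 1 : ℤ[X]).Monic := by simpa using monic_X_add_C (1 : ℤ)
    exact (hm.pow 2).leadingCoeff
  · simp [coeff_one]
  · rintro ⟨p, hev, hp⟩
    have h : ((X + 1 : ℤ[X]) - p) * ((X + 1) + p) = 0 := by linear_combination hp
    rcases mul_eq_zero.mp h with h | h
    · have : p = X + 1 := by linear_combination -h
      rw [this] at hev
      simp [coeff_one] at hev
    · have : p = -(X + 1) := by linear_combination h
      rw [this] at hev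
      simp [coeff_one] at hev
end

section
/- Let k be a field with char k ≠ 2, let t ∈ k with t ≠ 0, and let f = (x₁² + ⋯ + xₙ²)² − t(x₁⁴ + ⋯ + xₙ⁴) ∈ k[x₁,…,xₙ] with n ≥ 3. Then f has a polynomial factor of degree one if and only if n = 3 and t = 2. -/
open MvPolynomial

private lemma expand2' {k : Type*} [Field k] (a b c t : k) :
    ((Polynomial.X:Polynomial k)^2 + Polynomial.X^10
        + (Polynomial.C c + Polynomial.C a * Polynomial.X + Polynomial.C b * Polynomial.X^5)^2)^2
      - Polynomial.C t * ((Polynomial.X:Polynomial k)^4 + Polynomial.X^20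
        + (Polynomial.C c + Polynomial.C a * Polynomial.X + Polynomial.C b * Polynomial.X^5)^4)
    = Polynomial.C (c^4 + (-1)*c^4*t) * Polynomial.X^0 + Polynomial.C ((4)*a*c^3 + (-4)*a*c^3*t) * Polynomial.X^1 + Polynomial.C ((2)*c^2 + (6)*a^2*c^2 + (-6)*a^2*c^2*t) * Polynomial.X^2 + Polynomial.C ((4)*a*c + (4)*a^3*c + (-4)*a^3*c*t) * Polynomial.X^3 + Polynomial.C ((1) + (-1)*t + (2)*a^2 + a^4 + (-1)*a^4*t) * Polynomial.X^4 + Polynomial.C ((4)*b*c^3 + (-4)*b*c^3*t) * Polynomial.X^5 + Polynomial.C ((12)*a*b*c^2 + (-12)*a*b*c^2*t) * Polynomial.X^6 + Polynomial.C ((4)*b*c + (12)*a^2*b*c + (-12)*a^2*b*c*t) * Polynomial.X^7 + Polynomial.C ((4)*a*b + (4)*a^3*b + (-4)*a^3*b*t) * Polynomial.X^8 + Polynomial.C ((2)*c^2 + (6)*b^2*c^2 + (-6)*b^2*c^2*t) * Polynomial.X^10 + Polynomial.C ((4)*a*c + (12)*a*b^2*c + (-12)*a*b^2*c*t) * Polynomial.X^11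 + Polynomial.C ((2) + (2)*b^2 + (2)*a^2 + (6)*a^2*b^2 + (-6)*a^2*b^2*t) * Polynomial.X^12 + Polynomial.C ((4)*b*c + (4)*b^3*c + (-4)*b^3*c*t) * Polynomial.X^15 + Polynomial.C ((4)*a*b + (4)*a*b^3 + (-4)*a*b^3*t) * Polynomial.X^16 + Polynomial.C ((1) + (-1)*t + (2)*b^2 + b^4 + (-1)*b^4*t) * Polynomial.X^20 := by
  simp only [map_add, map_sub, map_mul, map_pow, map_neg, map_one, map_ofNat]
  ring

private lemma key2' {k : Type*} [Field k] (h2 : (2:k) ≠ 0) {t : k} (a b c : k)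
    (h : ((Polynomial.X:Polynomial k)^2 + Polynomial.X^10
        + (Polynomial.C c + Polynomial.C a * Polynomial.X + Polynomial.C b * Polynomial.X^5)^2)^2
      - Polynomial.C t * ((Polynomial.X:Polynomial k)^4 + Polynomial.X^20
        + (Polynomial.C c + Polynomial.C a * Polynomial.X + Polynomial.C b * Polynomial.X^5)^4) = 0) :
    t = 2 ∧ a^2 = 1 ∧ b^2 = 1 := by
  rw [expand2'] at h
  have e4 := congrArg (fun q => Polynomial.coeff q 4) h
  have e8 := congrArg (fun q => Polynomial.coeff q 8) h
  have e12 := congrArg (fun q => Polynomial.coeff q 12) h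
  have e16 := congrArg (fun q => Polynomial.coeff q 16) h
  have e20 := congrArg (fun q => Polynomial.coeff q 20) h
  simp only [Polynomial.coeff_add, Polynomial.coeff_C_mul, Polynomial.coeff_X_pow,
    Polynomial.coeff_zero] at e4 e8 e12 e16 e20
  norm_num at e4 e8 e12 e16 e20
  clear h
  rcases eq_or_ne a 0 with ha | ha
  · exfalso; subst ha
    exact h2 (by linear_combination e12 - e20 + (1+b^4)*e4)
  rcases eq_or_ne b 0 with hb | hb
  · exfalso; subst hb
    exact h2 (by linear_combination e12 - e4 + (1+a^4)*e20)
  have h4 : (4:k) ≠ 0 := by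
    intro h4'; apply h2
    have h22 : (2:k)*2 = 0 := by linear_combination h4'
    rcases mul_eq_zero.mp h22 with h' | h' <;> exact h'
  have h4ab : (4:k)*a*b ≠ 0 := mul_ne_zero (mul_ne_zero h4 ha) hb
  have hA : 1 + a^2 - t*a^2 = 0 := by
    have h' : ((4:k)*a*b) * (1 + a^2 - t*a^2) = 0 := by linear_combination e8
    exact (mul_eq_zero.mp h').resolve_left h4ab
  have hB : 1 + b^2 - t*b^2 = 0 := by
    have h' : ((4:k)*a*b) * (1 + b^2 - t*b^2) = 0 := by linear_combination e16
    exact (mul_eq_zero.mp h').resolve_left h4ab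
  have h12' : ((2:k)*(a^2*b^2)) * ((t-1)*(t-2)) = 0 := by
    linear_combination e12 - 2*t*a^2*hB - 2*(1+b^2)*hA
  have ht12 : (t-1)*(t-2) = 0 := by
    refine (mul_eq_zero.mp h12').resolve_left ?_
    exact mul_ne_zero h2 (mul_ne_zero (pow_ne_zero 2 ha) (pow_ne_zero 2 hb))
  rcases mul_eq_zero.mp ht12 with h' | h'
  · exact absurd (by linear_combination hA + a^2*h' : (1:k) = 0) one_ne_zero
  · exact ⟨by linear_combination h', by linear_combination -hA - a^2*h',
      by linear_combination -hB - b^2*h'⟩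

set_option maxHeartbeats 2000000 in
private lemma expand3' {k : Type*} [Field k] (a b c d t : k) :
    ((Polynomial.X:Polynomial k)^2 + Polynomial.X^10 + Polynomial.X^50
        + (Polynomial.C c + Polynomial.C a * Polynomial.X + Polynomial.C b * Polynomial.X^5
            + Polynomial.C d * Polynomial.X^25)^2)^2
      - Polynomial.C t * ((Polynomial.X:Polynomial k)^4 + Polynomial.X^20 + Polynomial.X^100
        + (Polynomial.C c + Polynomial.C a * Polynomial.X + Polynomial.C b * Polynomial.X^5
            + Polynomial.C d * Polynomial.X^25)^4)
    = Polynomial.C (c^4 + (-1)*c^4*t) * Polynomial.X^0 + Polynomial.C ((4)*a*c^3 + (-4)*a*c^3*t) * Polynomial.X^1 + Polynomial.C ((2)*c^2 + (6)*a^2*c^2 + (-6)*a^2*c^2*t) * Polynomial.X^2 + Polynomial.C ((4)*a*c + (4)*a^3*c + (-4)*a^3*c*t) * Polynomial.X^3 + Polynomial.C ((1) + (-1)*t + (2)*a^2 + a^4 + (-1)*a^4*t) * Polynomial.X^4 + Polynomial.C ((4)*b*c^3 + (-4)*b*c^3*t) * Polynomial.X^5 + Polynomial.C ((12)*a*b*c^2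 + (-12)*a*b*c^2*t) * Polynomial.X^6 + Polynomial.C ((4)*b*c + (12)*a^2*b*c + (-12)*a^2*b*c*t) * Polynomial.X^7 + Polynomial.C ((4)*a*b + (4)*a^3*b + (-4)*a^3*b*t) * Polynomial.X^8 + Polynomial.C ((2)*c^2 + (6)*b^2*c^2 + (-6)*b^2*c^2*t) * Polynomial.X^10 + Polynomial.C ((4)*a*c + (12)*a*b^2*c + (-12)*a*b^2*c*t) * Polynomial.X^11 + Polynomial.C ((2) + (2)*b^2 + (2)*a^2 + (6)*a^2*b^2 + (-6)*a^2*b^2*t) * Polynomial.X^12 + Polynomial.C ((4)*b*c + (4)*b^3*c + (-4)*b^3*c*t) * Polynomial.X^15 + Polynomial.C ((4)*a*b + (4)*a*b^3 + (-4)*a*b^3*t) * Polynomial.X^16 + Polynomial.C ((1) + (-1)*t + (2)*b^2 + b^4 + (-1)*b^4*t) * Polynomial.X^20 + Polynomial.C ((4)*c^3*d + (-4)*c^3*d*t) * Polynomial.X^25 + Polynomial.C ((12)*a*c^2*d + (-12)*a*c^2*d*t) * Polynomial.X^26 + Polynomial.C ((4)*c*d + (12)*a^2*c*d + (-12)*a^2*c*d*t)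 * Polynomial.X^27 + Polynomial.C ((4)*a*d + (4)*a^3*d + (-4)*a^3*d*t) * Polynomial.X^28 + Polynomial.C ((12)*b*c^2*d + (-12)*b*c^2*d*t) * Polynomial.X^30 + Polynomial.C ((24)*a*b*c*d + (-24)*a*b*c*d*t) * Polynomial.X^31 + Polynomial.C ((4)*b*d + (12)*a^2*b*d + (-12)*a^2*b*d*t) * Polynomial.X^32 + Polynomial.C ((4)*c*d + (12)*b^2*c*d + (-12)*b^2*c*d*t) * Polynomial.X^35 + Polynomial.C ((4)*a*d + (12)*a*b^2*d + (-12)*a*b^2*d*t) * Polynomial.X^36 + Polynomial.C ((4)*b*d + (4)*b^3*d + (-4)*b^3*d*t) * Polynomial.X^40 + Polynomial.C ((2)*c^2 + (6)*c^2*d^2 + (-6)*c^2*d^2*t) * Polynomial.X^50 + Polynomial.C ((4)*a*c + (12)*a*c*d^2 + (-12)*a*c*d^2*t) * Polynomial.X^51 + Polynomial.C ((2) + (2)*d^2 + (2)*a^2 + (6)*a^2*d^2 + (-6)*a^2*d^2*t) * Polynomial.X^52 + Polynomial.C ((4)*b*c + (12)*b*c*d^2 + (-12)*b*c*d^2*t)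 * Polynomial.X^55 + Polynomial.C ((4)*a*b + (12)*a*b*d^2 + (-12)*a*b*d^2*t) * Polynomial.X^56 + Polynomial.C ((2) + (2)*d^2 + (2)*b^2 + (6)*b^2*d^2 + (-6)*b^2*d^2*t) * Polynomial.X^60 + Polynomial.C ((4)*c*d + (4)*c*d^3 + (-4)*c*d^3*t) * Polynomial.X^75 + Polynomial.C ((4)*a*d + (4)*a*d^3 + (-4)*a*d^3*t) * Polynomial.X^76 + Polynomial.C ((4)*b*d + (4)*b*d^3 + (-4)*b*d^3*t) * Polynomial.X^80 + Polynomial.C ((1) + (-1)*t + (2)*d^2 + d^4 + (-1)*d^4*t) * Polynomial.X^100 := by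
  simp only [map_add, map_sub, map_mul, map_pow, map_neg, map_one, map_ofNat]
  ring

private lemma key3' {k : Type*} [Field k] (h2 : (2:k) ≠ 0) {t a b c d : k} (ht2 : t = 2)
    (ha : a^2 = 1) (hb : b^2 = 1) (hd : d^2 = 1)
    (h : ((Polynomial.X:Polynomial k)^2 + Polynomial.X^10 + Polynomial.X^50
        + (Polynomial.C c + Polynomial.C a * Polynomial.X + Polynomial.C b * Polynomial.X^5
            + Polynomial.C d * Polynomial.X^25)^2)^2
      - Polynomial.C t * ((Polynomial.X:Polynomial k)^4 + Polynomial.X^20 + Polynomial.X^100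
        + (Polynomial.C c + Polynomial.C a * Polynomial.X + Polynomial.C b * Polynomial.X^5
            + Polynomial.C d * Polynomial.X^25)^4) = 0) :
    False := by
  rw [expand3'] at h
  have e32 := congrArg (fun q => Polynomial.coeff q 32) h
  simp only [Polynomial.coeff_add, Polynomial.coeff_C_mul, Polynomial.coeff_X_pow,
    Polynomial.coeff_zero] at e32
  norm_num at e32
  have h8 : (2:k)*(2*(2*(b*d))) = 0 := by
    linear_combination -e32 - 12*a^2*b*d*ht2 - 12*b*d*ha
  have hbd : b*d = 0 := by
    rcases mul_eq_zero.mp h8 with h' | h'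
    · exact absurd h' h2
    rcases mul_eq_zero.mp h' with h' | h'
    · exact absurd h' h2
    rcases mul_eq_zero.mp h' with h' | h'
    · exact absurd h' h2
    · exact h'
  exact one_ne_zero (α := k) (by linear_combination b*d*hbd - d^2*hb - hd)

private lemma single_of_sum_eq_one' {σ : Type*} {d : σ →₀ ℕ}
    (h : (d.sum fun _ e => e) = 1) : ∃ j, d = Finsupp.single j 1 := by
  classical
  have hne : d.support.Nonempty := by
    by_contra hcon
    rw [Finset.not_nonempty_iff_eq_empty] at hcon
    rw [Finsupp.sum, hcon, Finset.sum_empty] at h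
    exact one_ne_zero h.symm
  obtain ⟨j, hj⟩ := hne
  have hsplit : d j + ∑ i ∈ d.support.erase j, d i = 1 := by
    rw [Finset.add_sum_erase _ _ hj]; exact h
  have hdj : 1 ≤ d j := Nat.one_le_iff_ne_zero.mpr (Finsupp.mem_support_iff.mp hj)
  have hrest : ∑ i ∈ d.support.erase j, d i = 0 := by omega
  have hdj1 : d j = 1 := by omega
  refine ⟨j, Finsupp.ext fun i => ?_⟩
  rcases eq_or_ne i j with rfl | hij
  · simpa using hdj1
  · rw [Finsupp.single_apply, if_neg (Ne.symm hij)]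
    by_contra hdi
    have hi : i ∈ d.support.erase j := Finset.mem_erase.mpr ⟨hij, Finsupp.mem_support_iff.mpr hdi⟩
    exact hdi (Finset.sum_eq_zero_iff.mp hrest i hi)

private lemma sum_single_coeffs' {σ : Type*} (d : σ →₀ ℕ) :
    (d.sum fun _ e => e) = ∑ i ∈ d.support, d i := rfl

private lemma eq_affine' {k : Type*} [CommRing k] {n : ℕ} (p : MvPolynomial (Fin n) k)
    (h : p.totalDegree ≤ 1) :
    p = C (coeff 0 p) + ∑ i : Fin n, C (coeff (Finsupp.single i 1) p) * X i := by
  classical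
  apply MvPolynomial.ext
  intro m
  rw [coeff_add, coeff_C, coeff_sum]
  simp only [coeff_C_mul, coeff_X', mul_ite, mul_one, mul_zero]
  rcases Nat.lt_or_ge (m.sum fun _ e => e) 2 with hm | hm
  · interval_cases hs : (m.sum fun _ e => e)
    · have hm0 : m = 0 := by
        ext i
        rcases eq_or_ne (m i) 0 with h0 | h0
        · simpa using h0
        · exfalso
          have hi : i ∈ m.support := Finsupp.mem_support_iff.mpr h0
          have : m i ≤ ∑ j ∈ m.support, m j :=
            Finset.single_le_sum (fun _ _ => Nat.zero_le _) hi
          rw [← sum_single_coeffs', hs] at this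
          omega
      subst hm0
      rw [if_pos rfl]
      have hns : ∀ i : Fin n, ¬ (Finsupp.single i 1 = 0) := by
        intro i hcon
        have := DFunLike.congr_fun hcon i
        simp at this
      simp only [hns, if_false, Finset.sum_const_zero, Finsupp.coe_zero, Pi.zero_apply]
      ring
    · obtain ⟨j, rfl⟩ := single_of_sum_eq_one' hs
      rw [if_neg (by
        intro hcon
        have := DFunLike.congr_fun hcon j
        simp at this)]
      simp only [Finsupp.single_left_inj (Nat.one_ne_zero)]
      rw [Finset.sum_ite_eq' Finset.univ j (fun i => coeff (Finsupp.single i 1) p)]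
      simp
  · have hz : coeff m p = 0 := by
      apply coeff_eq_zero_of_totalDegree_lt
      calc p.totalDegree ≤ 1 := h
        _ < 2 := by omega
        _ ≤ ∑ i ∈ m.support, m i := by rw [← sum_single_coeffs']; exact hm
    rw [hz]
    have hm0 : ¬ ((0 : Fin n →₀ ℕ) = m) := by
      intro hcon; rw [← hcon] at hm; simp [Finsupp.sum] at hm
    have hms : ∀ i : Fin n, ¬ (Finsupp.single i 1 = m) := by
      intro i hcon
      rw [← hcon] at hm
      rw [Finsupp.sum_single_index] at hm
      · omega
      · rfl
    simp only [hm0, hms, if_false, Finset.sum_const_zero]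
    ring

set_option maxHeartbeats 2000000 in
/-- For a field `k` with `char k ≠ 2`, `t ≠ 0`, and `n ≥ 3`, the polynomial
`f = (Σxᵢ²)² - t·Σxᵢ⁴` has a factor of (total) degree one iff `n = 3` and `t = 2`. -/
theorem stmt_12 (k : Type*) [Field k] (hchar : ringChar k ≠ 2)
    (n : ℕ) (hn : 3 ≤ n) (t : k) (ht : t ≠ 0) :
    (∃ p : MvPolynomial (Fin n) k, p.totalDegree = 1 ∧
        p ∣ ((∑ i : Fin n, X i ^ 2) ^ 2 - C t * ∑ i : Fin n, X i ^ 4)) ↔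
      n = 3 ∧ t = 2 := by
  classical
  have h2 : (2:k) ≠ 0 := Ring.two_ne_zero hchar
  constructor
  · rintro ⟨p, hdeg, hdvd⟩
    obtain ⟨q, hq⟩ := hdvd
    obtain ⟨cc, aa, hp⟩ : ∃ (cc : k) (aa : Fin n → k),
        p = C cc + ∑ i : Fin n, C (aa i) * X i :=
      ⟨_, _, eq_affine' p hdeg.le⟩
    have hex : ∃ j, aa j ≠ 0 := by
      by_contra hall
      push_neg at hall
      have hpc : p = C cc := by
        rw [hp]
        simp [hall]
      rw [hpc, totalDegree_C] at hdeg
      exact zero_ne_one hdeg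
    obtain ⟨j, hj⟩ := hex
    obtain ⟨φ, hφj, hφm⟩ : ∃ φ : Fin n → MvPolynomial (Fin n) k,
        φ j = X j - C (aa j)⁻¹ * p ∧ ∀ m, m ≠ j → φ m = X m :=
      ⟨fun i => if i = j then X j - C (aa j)⁻¹ * p else X i, by simp,
        fun m hm => by simp [hm]⟩
    have hCinv : C (aa j) * (C (aa j)⁻¹ * p) = p := by
      rw [← mul_assoc, ← C_mul, mul_inv_cancel₀ hj, C_1, one_mul]
    have hφp : aeval φ p = 0 := by
      conv_lhs => rw [hp]
      rw [map_add, map_sum]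
      simp only [map_mul, aeval_X, aeval_C, algebraMap_eq]
      rw [← Finset.sum_erase_add _ _ (Finset.mem_univ j)]
      rw [Finset.sum_congr rfl
        (fun m hm => by rw [hφm _ (Finset.ne_of_mem_erase hm)] :
          ∀ m ∈ Finset.univ.erase j, C (aa m) * φ m = C (aa m) * X m)]
      have hSe : ∑ m ∈ Finset.univ.erase j, C (aa m) * X m
          = (∑ m : Fin n, C (aa m) * X m) - C (aa j) * X j := by
        rw [← Finset.sum_erase_add _ _ (Finset.mem_univ j)]; ring
      rw [hSe, hφj, mul_sub, hCinv, hp]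
      ring
    have hφf : (∑ i : Fin n, (φ i) ^ 2) ^ 2 - C t * ∑ i : Fin n, (φ i) ^ 4 = 0 := by
      have h0 := congrArg (aeval φ) hq
      simp only [map_sub, map_mul, map_pow, map_sum, aeval_X, aeval_C, algebraMap_eq] at h0
      rw [hφp, zero_mul] at h0
      exact h0
    have pair : ∀ i l : Fin n, i ≠ j → l ≠ j → i ≠ l →
        t = 2 ∧ ((aa j)⁻¹ * aa i) ^ 2 = 1 ∧ ((aa j)⁻¹ * aa l) ^ 2 = 1 := by
      intro i l hij hlj hil
      obtain ⟨ψ, hψi, hψl, hψ0⟩ : ∃ ψ : Fin n → Polynomial k,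
          ψ i = Polynomial.X ∧ ψ l = Polynomial.X ^ 5 ∧
            ∀ x, x ≠ i → x ≠ l → ψ x = 0 :=
        ⟨fun x => if x = i then Polynomial.X else if x = l then Polynomial.X ^ 5 else 0,
          by simp, by simp [Ne.symm hil],
          fun x h1 h2 => by simp [h1, h2]⟩
      have hsub : ({i, l} : Finset (Fin n)) ⊆ Finset.univ.erase j := by
        intro x hx
        rcases Finset.mem_insert.mp hx with rfl | hx
        · exact Finset.mem_erase.mpr ⟨hij, Finset.mem_univ _⟩
        · rw [Finset.mem_singleton] at hx
          subst hx
          exact Finset.mem_erase.mpr ⟨hlj, Finset.mem_univ _⟩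
      have hsum : ∀ r : ℕ, r ≠ 0 → ∑ m : Fin n, (aeval ψ (φ m)) ^ r
          = (Polynomial.X ^ r + (Polynomial.X ^ 5) ^ r) + (aeval ψ (φ j)) ^ r := by
        intro r hr
        rw [← Finset.sum_erase_add _ _ (Finset.mem_univ j)]
        congr 1
        calc ∑ m ∈ Finset.univ.erase j, (aeval ψ (φ m)) ^ r
            = ∑ m ∈ Finset.univ.erase j, (ψ m) ^ r :=
              Finset.sum_congr rfl (fun m hm => by
                rw [hφm _ (Finset.ne_of_mem_erase hm), aeval_X])
          _ = ∑ m ∈ ({i, l} : Finset (Fin n)), (ψ m) ^ r := by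
              refine (Finset.sum_subset hsub (fun x _ hx2 => ?_)).symm
              simp only [Finset.mem_insert, Finset.mem_singleton, not_or] at hx2
              rw [hψ0 x hx2.1 hx2.2]
              exact zero_pow hr
          _ = (ψ i) ^ r + (ψ l) ^ r := Finset.sum_pair hil
          _ = Polynomial.X ^ r + (Polynomial.X ^ 5) ^ r := by rw [hψi, hψl]
      have hψp : aeval ψ p = Polynomial.C cc
          + (Polynomial.C (aa i) * Polynomial.X + Polynomial.C (aa l) * Polynomial.X ^ 5) := by
        conv_lhs => rw [hp]
        rw [map_add, map_sum]
        simp only [map_mul, aeval_X, aeval_C, Polynomial.algebraMap_eq]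
        congr 1
        calc ∑ m : Fin n, Polynomial.C (aa m) * ψ m
            = ∑ m ∈ ({i, l} : Finset (Fin n)), Polynomial.C (aa m) * ψ m := by
              refine (Finset.sum_subset (Finset.subset_univ _) (fun x _ hx2 => ?_)).symm
              simp only [Finset.mem_insert, Finset.mem_singleton, not_or] at hx2
              rw [hψ0 x hx2.1 hx2.2, mul_zero]
          _ = Polynomial.C (aa i) * ψ i + Polynomial.C (aa l) * ψ l := Finset.sum_pair hil
          _ = _ := by rw [hψi, hψl]
      have hgj : aeval ψ (φ j) = Polynomial.C (-((aa j)⁻¹ * cc))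
          + Polynomial.C (-((aa j)⁻¹ * aa i)) * Polynomial.X
          + Polynomial.C (-((aa j)⁻¹ * aa l)) * Polynomial.X ^ 5 := by
        rw [hφj, map_sub, aeval_X, map_mul, aeval_C, Polynomial.algebraMap_eq, hψp,
          hψ0 j (fun hc => hij hc.symm) (fun hc => hlj hc.symm)]
        simp only [map_neg, map_mul]
        ring
      have h0 := congrArg (aeval ψ) hφf
      simp only [map_sub, map_mul, map_pow, map_sum, map_zero, aeval_X, aeval_C,
        Polynomial.algebraMap_eq] at h0
      rw [hsum 2 (by norm_num), hsum 4 (by norm_num), hgj] at h0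
      have hkey := key2' (t := t) h2 (-((aa j)⁻¹ * aa i)) (-((aa j)⁻¹ * aa l)) (-((aa j)⁻¹ * cc))
        (by linear_combination h0)
      exact ⟨hkey.1, by rw [← neg_sq]; exact hkey.2.1, by rw [← neg_sq]; exact hkey.2.2⟩
    have hcard : (Finset.univ.erase j).card = n - 1 := by
      rw [Finset.card_erase_of_mem (Finset.mem_univ j), Finset.card_univ, Fintype.card_fin]
    obtain ⟨i0, l0, hi0, hl0, hil0⟩ := Finset.one_lt_card_iff.mp
      (by rw [hcard]; omega : 1 < (Finset.univ.erase j).card)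
    have ht2 := (pair i0 l0 (Finset.ne_of_mem_erase hi0) (Finset.ne_of_mem_erase hl0) hil0).1
    refine ⟨?_, ht2⟩
    by_contra hne3
    have h4n : 4 ≤ n := by
      rcases Nat.lt_or_ge n 4 with h' | h'
      · exact absurd (by omega : n = 3) hne3
      · exact h'
    obtain ⟨i, l, m, hi, hl, hm, hil, him, hlm⟩ := Finset.two_lt_card_iff.mp
      (by rw [hcard]; omega : 2 < (Finset.univ.erase j).card)
    have hij := Finset.ne_of_mem_erase hi
    have hlj := Finset.ne_of_mem_erase hl
    have hmj := Finset.ne_of_mem_erase hm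
    obtain ⟨-, hA2, hB2⟩ := pair i l hij hlj hil
    obtain ⟨-, -, hD2⟩ := pair i m hij hmj him
    obtain ⟨ψ, hψi, hψl, hψm, hψ0⟩ : ∃ ψ : Fin n → Polynomial k,
        ψ i = Polynomial.X ∧ ψ l = Polynomial.X ^ 5 ∧ ψ m = Polynomial.X ^ 25 ∧
          ∀ x, x ≠ i → x ≠ l → x ≠ m → ψ x = 0 :=
      ⟨fun x => if x = i then Polynomial.X else if x = l then Polynomial.X ^ 5
          else if x = m then Polynomial.X ^ 25 else 0,
        by simp,
        by simp [Ne.symm hil],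
        by simp [Ne.symm him, Ne.symm hlm],
        fun x h1 h2 h3 => by simp [h1, h2, h3]⟩
    have hnotmem : i ∉ ({l, m} : Finset (Fin n)) := by
      simp only [Finset.mem_insert, Finset.mem_singleton, not_or]
      exact ⟨hil, him⟩
    have hsub : ({i, l, m} : Finset (Fin n)) ⊆ Finset.univ.erase j := by
      intro x hx
      rcases Finset.mem_insert.mp hx with rfl | hx
      · exact Finset.mem_erase.mpr ⟨hij, Finset.mem_univ _⟩
      rcases Finset.mem_insert.mp hx with rfl | hx
      · exact Finset.mem_erase.mpr ⟨hlj, Finset.mem_univ _⟩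
      rw [Finset.mem_singleton] at hx
      subst hx
      exact Finset.mem_erase.mpr ⟨hmj, Finset.mem_univ _⟩
    have hsum : ∀ r : ℕ, r ≠ 0 → ∑ x : Fin n, (aeval ψ (φ x)) ^ r
        = (Polynomial.X ^ r + (Polynomial.X ^ 5) ^ r + (Polynomial.X ^ 25) ^ r)
          + (aeval ψ (φ j)) ^ r := by
      intro r hr
      rw [← Finset.sum_erase_add _ _ (Finset.mem_univ j)]
      congr 1
      calc ∑ x ∈ Finset.univ.erase j, (aeval ψ (φ x)) ^ r
          = ∑ x ∈ Finset.univ.erase j, (ψ x) ^ r :=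
            Finset.sum_congr rfl (fun x hx => by
              rw [hφm _ (Finset.ne_of_mem_erase hx), aeval_X])
        _ = ∑ x ∈ ({i, l, m} : Finset (Fin n)), (ψ x) ^ r := by
            refine (Finset.sum_subset hsub (fun x _ hx2 => ?_)).symm
            simp only [Finset.mem_insert, Finset.mem_singleton, not_or] at hx2
            rw [hψ0 x hx2.1 hx2.2.1 hx2.2.2]
            exact zero_pow hr
        _ = (ψ i) ^ r + ((ψ l) ^ r + (ψ m) ^ r) := by
            rw [Finset.sum_insert hnotmem, Finset.sum_pair hlm]
        _ = Polynomial.X ^ r + ((Polynomial.X ^ 5) ^ r + (Polynomial.X ^ 25) ^ r) := by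
            rw [hψi, hψl, hψm]
        _ = _ := by ring
    have hψp : aeval ψ p = Polynomial.C cc
        + (Polynomial.C (aa i) * Polynomial.X + Polynomial.C (aa l) * Polynomial.X ^ 5
          + Polynomial.C (aa m) * Polynomial.X ^ 25) := by
      conv_lhs => rw [hp]
      rw [map_add, map_sum]
      simp only [map_mul, aeval_X, aeval_C, Polynomial.algebraMap_eq]
      congr 1
      calc ∑ x : Fin n, Polynomial.C (aa x) * ψ x
          = ∑ x ∈ ({i, l, m} : Finset (Fin n)), Polynomial.C (aa x) * ψ x := by
            refine (Finset.sum_subset (Finset.subset_univ _) (fun x _ hx2 => ?_)).symm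
            simp only [Finset.mem_insert, Finset.mem_singleton, not_or] at hx2
            rw [hψ0 x hx2.1 hx2.2.1 hx2.2.2, mul_zero]
        _ = Polynomial.C (aa i) * ψ i
            + (Polynomial.C (aa l) * ψ l + Polynomial.C (aa m) * ψ m) := by
            rw [Finset.sum_insert hnotmem, Finset.sum_pair hlm]
        _ = _ := by rw [hψi, hψl, hψm]; ring
    have hgj : aeval ψ (φ j) = Polynomial.C (-((aa j)⁻¹ * cc))
        + Polynomial.C (-((aa j)⁻¹ * aa i)) * Polynomial.X
        + Polynomial.C (-((aa j)⁻¹ * aa l)) * Polynomial.X ^ 5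
        + Polynomial.C (-((aa j)⁻¹ * aa m)) * Polynomial.X ^ 25 := by
      rw [hφj, map_sub, aeval_X, map_mul, aeval_C, Polynomial.algebraMap_eq, hψp,
        hψ0 j (fun hc => hij hc.symm) (fun hc => hlj hc.symm) (fun hc => hmj hc.symm)]
      simp only [map_neg, map_mul]
      ring
    have h0 := congrArg (aeval ψ) hφf
    simp only [map_sub, map_mul, map_pow, map_sum, map_zero, aeval_X, aeval_C,
      Polynomial.algebraMap_eq] at h0
    rw [hsum 2 (by norm_num), hsum 4 (by norm_num), hgj] at h0
    exact key3' (c := -((aa j)⁻¹ * cc)) h2 ht2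
      ((neg_sq _).trans hA2) ((neg_sq _).trans hB2) ((neg_sq _).trans hD2)
      (by linear_combination h0)
  · rintro ⟨rfl, rfl⟩
    refine ⟨X 0 + X 1 + X 2, ?_, ?_⟩
    · apply le_antisymm
      · refine le_trans (totalDegree_add _ _) (max_le (le_trans (totalDegree_add _ _)
          (max_le ?_ ?_)) ?_) <;> exact le_of_eq (totalDegree_X _)
      · have hc : coeff (Finsupp.single (0 : Fin 3) 1)
            (X 0 + X 1 + X 2 : MvPolynomial (Fin 3) k) = 1 := by
          simp [coeff_add, coeff_X', Finsupp.single_eq_single_iff]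
        have hmem : Finsupp.single (0 : Fin 3) 1 ∈
            (X 0 + X 1 + X 2 : MvPolynomial (Fin 3) k).support :=
          mem_support_iff.mpr (by rw [hc]; exact one_ne_zero)
        have := le_totalDegree hmem
        rwa [Finsupp.sum_single_index rfl] at this
    · refine ⟨(-X 0 + X 1 + X 2) * ((X 0 - X 1 + X 2) * (X 0 + X 1 - X 2)), ?_⟩
      rw [Fin.sum_univ_three, Fin.sum_univ_three]
      rw [show (C (2:k) : MvPolynomial (Fin 3) k) = 2 from map_ofNat _ 2]
      ring
end

section
/- Let k be a field with char k ≠ 2 and with t ∈ k, t ∉ {0, 2}. The polynomial f = (x₁² + x₂² + x₃²)² − t(x₁⁴ + x₂⁴ + x₃⁴) ∈ k[x₁,x₂,x₃] is reducible if and only if t = 3 and k contains a primitive third root of unity. -/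
section PolyAux

open Polynomial

lemma aux_cube_expand {K : Type*} [Field K] (s : K[X]) (h2 : (2:K) ≠ 0)
    (e4 e2 e0 : K) (he4 : e4 ≠ 0)
    (h : s ^ 2 = C e4 * X ^ 4 + C e2 * X ^ 2 + C e0) :
    ∃ c2 c0 : K, c2 ^ 2 = e4 ∧ c0 ^ 2 = e0 ∧ 2 * (c2 * c0) = e2 := by
  have hGdeg : (C e4 * X ^ 4 + C e2 * X ^ 2 + C e0 : K[X]).natDegree = 4 := by
    compute_degree!
  have hs0 : s ≠ 0 := by
    intro h0
    rw [h0] at h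
    have := hGdeg
    rw [← h] at this
    simp at this
  have hsdeg : s.natDegree = 2 := by
    have : (s ^ 2).natDegree = 4 := by rw [h]; exact hGdeg
    rw [natDegree_pow] at this
    omega
  set c0 := s.coeff 0 with hc0
  set c1 := s.coeff 1 with hc1
  set c2 := s.coeff 2 with hc2
  have hsexp : s = C c2 * X ^ 2 + C c1 * X + C c0 := by
    ext n
    rcases n with _ | _ | _ | n
    · simp [hc0]
    · simp [hc1]
    · simp [hc2]
    · rw [coeff_eq_zero_of_natDegree_lt (by omega)]
      simp [coeff_X_pow]
  rw [hsexp] at h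
  have hsq : (C c2 * X ^ 2 + C c1 * X + C c0 : K[X]) ^ 2
      = C (c2^2) * X ^ 4 + C (2*c2*c1) * X ^ 3 + C (c1^2 + 2*c2*c0) * X ^ 2
        + C (2*c1*c0) * X + C (c0^2) := by
    simp only [C_add, C_mul, C_pow, map_ofNat]
    ring
  rw [hsq] at h
  have e4' : c2 ^ 2 = e4 := by
    have := congrArg (fun p => Polynomial.coeff p 4) h
    simp only [coeff_add, coeff_C_mul, coeff_X_pow, coeff_X, coeff_C] at this
    norm_num at this
    exact this
  have e3' : (2:K) * c2 * c1 = 0 := by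
    have := congrArg (fun p => Polynomial.coeff p 3) h
    simp only [coeff_add, coeff_C_mul, coeff_X_pow, coeff_X, coeff_C] at this
    simpa using this
  have e2' : c1 ^ 2 + 2 * c2 * c0 = e2 := by
    have := congrArg (fun p => Polynomial.coeff p 2) h
    simp only [coeff_add, coeff_C_mul, coeff_X_pow, coeff_X, coeff_C] at this
    norm_num at this
    exact this
  have e0' : c0 ^ 2 = e0 := by
    have := congrArg (fun p => Polynomial.coeff p 0) h
    simp only [coeff_add, coeff_C_mul, coeff_X_pow, coeff_X, coeff_C] at this
    norm_num at this
    exact this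
  have hc2ne : c2 ≠ 0 := by
    intro h0; rw [h0] at e4'; simp at e4'; exact he4 e4'.symm
  have hc1z : c1 = 0 := by
    rcases mul_eq_zero.mp e3' with h' | h'
    · rcases mul_eq_zero.mp h' with h'' | h''
      · exact absurd h'' h2
      · exact absurd h'' hc2ne
    · exact h'
  refine ⟨c2, c0, e4', e0', ?_⟩
  rw [hc1z] at e2'
  linear_combination e2'

lemma aux_monicQuad {K : Type*} [Field K] {p : K[X]} (hm : p.Monic) (hd : p.natDegree = 2) :
    p = X ^ 2 + C (p.coeff 1) * X + C (p.coeff 0) := by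
  ext n
  rcases n with _ | _ | _ | n
  · simp
  · simp [coeff_X_pow]
  · have : p.coeff 2 = 1 := by
      have := hm.coeff_natDegree
      rwa [hd] at this
    simp [coeff_X_pow, this]
  · rw [coeff_eq_zero_of_natDegree_lt (by omega)]
    simp [coeff_X_pow]

lemma aux_degOneCase {K : Type*} [Field K] (k4 k2 k0 : K)
    (g h : K[X]) (hgh : C k4 * X ^ 4 + C k2 * X ^ 2 + C k0 = g * h)
    (hg1 : g.natDegree = 1) :
    ∃ u : K, u ^ 2 = k2 ^ 2 - 4 * (k4 * k0) := by
  have hg0 : g ≠ 0 := by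
    intro h0
    rw [h0] at hg1
    simp at hg1
  have ha : g.coeff 1 ≠ 0 := by
    have := Polynomial.leadingCoeff_ne_zero.mpr hg0
    rwa [Polynomial.leadingCoeff, hg1] at this
  set a := g.coeff 1
  set b := g.coeff 0
  have hgexp : g = C a * X + C b := eq_X_add_C_of_natDegree_le_one (by omega)
  set α := -b / a with hα
  have hgz : g.eval α = 0 := by
    rw [hgexp, hα]
    simp only [eval_add, eval_mul, eval_C, eval_X]
    field_simp
    ring
  have hq : k4 * α ^ 4 + k2 * α ^ 2 + k0 = 0 := by
    have := congrArg (fun p => Polynomial.eval α p) hgh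
    simpa [hgz] using this
  exact ⟨2 * k4 * α ^ 2 + k2, by linear_combination 4 * k4 * hq⟩

lemma aux_degTwoCase {K : Type*} [Field K] (k2 k0 : K)
    (g h : K[X]) (hgh : C k2 * X ^ 2 + C k0 = g * h)
    (hg1 : g.natDegree = 1) :
    ∃ u : K, u ^ 2 = -(k2 * k0) := by
  have hg0 : g ≠ 0 := by
    intro h0
    rw [h0] at hg1
    simp at hg1
  have ha : g.coeff 1 ≠ 0 := by
    have := Polynomial.leadingCoeff_ne_zero.mpr hg0
    rwa [Polynomial.leadingCoeff, hg1] at this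
  set a := g.coeff 1
  set b := g.coeff 0
  have hgexp : g = C a * X + C b := eq_X_add_C_of_natDegree_le_one (by omega)
  set α := -b / a with hα
  have hgz : g.eval α = 0 := by
    rw [hgexp, hα]
    simp only [eval_add, eval_mul, eval_C, eval_X]
    field_simp
    ring
  have hq : k2 * α ^ 2 + k0 = 0 := by
    have := congrArg (fun p => Polynomial.eval α p) hgh
    simpa [hgz] using this
  exact ⟨k2 * α, by linear_combination k2 * hq⟩

lemma aux_quartic_factor {K : Type*} [Field K] (k4 k2 k0 : K) (hk4 : k4 ≠ 0)
    (g h : K[X]) (hgh : C k4 * X ^ 4 + C k2 * X ^ 2 + C k0 = g * h)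
    (hg : ¬ IsUnit g) (hh : ¬ IsUnit h) :
    (∃ u : K, u ^ 2 = k2 ^ 2 - 4 * (k4 * k0)) ∨ (∃ v : K, v ^ 2 = k4 * k0) := by
  have hqdeg : (C k4 * X ^ 4 + C k2 * X ^ 2 + C k0 : K[X]).natDegree = 4 := by
    compute_degree!
  have hq0 : (C k4 * X ^ 4 + C k2 * X ^ 2 + C k0 : K[X]) ≠ 0 := fun h0 => by
    rw [h0] at hqdeg
    simp at hqdeg
  have hg0 : g ≠ 0 := fun h0 => hq0 (by rw [hgh, h0, zero_mul])
  have hh0 : h ≠ 0 := fun h0 => hq0 (by rw [hgh, h0, mul_zero])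
  have hdsum : g.natDegree + h.natDegree = 4 := by
    rw [← hqdeg, hgh, Polynomial.natDegree_mul hg0 hh0]
  have hdg1 : 1 ≤ g.natDegree := by
    rcases Nat.eq_zero_or_pos g.natDegree with h0 | h0
    · exfalso
      apply hg
      rw [Polynomial.eq_C_of_natDegree_eq_zero h0]
      refine isUnit_C.mpr (isUnit_iff_ne_zero.mpr (fun hc => hg0 ?_))
      rw [Polynomial.eq_C_of_natDegree_eq_zero h0, hc, map_zero]
    · exact h0
  have hdh1 : 1 ≤ h.natDegree := by
    rcases Nat.eq_zero_or_pos h.natDegree with h0 | h0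
    · exfalso
      apply hh
      rw [Polynomial.eq_C_of_natDegree_eq_zero h0]
      refine isUnit_C.mpr (isUnit_iff_ne_zero.mpr (fun hc => hh0 ?_))
      rw [Polynomial.eq_C_of_natDegree_eq_zero h0, hc, map_zero]
    · exact h0
  have hcases : g.natDegree = 1 ∨ g.natDegree = 2 ∨ g.natDegree = 3 := by omega
  rcases hcases with hdg | hdg | hdg
  · exact Or.inl (aux_degOneCase k4 k2 k0 g h hgh hdg)
  · -- degree 2 * degree 2
    have hdh2 : h.natDegree = 2 := by omega
    set lg := g.leadingCoeff with hlg
    set lh := h.leadingCoeff with hlh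
    have hlg0 : lg ≠ 0 := leadingCoeff_ne_zero.mpr hg0
    have hlh0 : lh ≠ 0 := leadingCoeff_ne_zero.mpr hh0
    set g1 := g * C lg⁻¹ with hg1def
    set h1 := h * C lh⁻¹ with hh1def
    have hg1m : g1.Monic := monic_mul_leadingCoeff_inv hg0
    have hh1m : h1.Monic := monic_mul_leadingCoeff_inv hh0
    have hg1d : g1.natDegree = 2 := by
      rw [hg1def, Polynomial.natDegree_mul hg0 (fun h0 => by
        simp [inv_eq_zero, hlg0] at h0), natDegree_C]
      omega
    have hh1d : h1.natDegree = 2 := by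
      rw [hh1def, Polynomial.natDegree_mul hh0 (fun h0 => by
        simp [inv_eq_zero, hlh0] at h0), natDegree_C]
      omega
    have hlead : (C k4 * X ^ 4 + C k2 * X ^ 2 + C k0 : K[X]).leadingCoeff = k4 := by
      rw [Polynomial.leadingCoeff, hqdeg]
      simp [coeff_X_pow, coeff_C]
    have hlglh : lg * lh = k4 := by
      rw [← hlead, hgh, leadingCoeff_mul]
    have hC1 : (C lg⁻¹ * C lh⁻¹ * C (lg * lh) : K[X]) = 1 := by
      rw [← C_mul, ← C_mul, ← C_1]
      congr 1
      field_simp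
    have key : C k4 * X ^ 4 + C k2 * X ^ 2 + C k0 = C k4 * (g1 * h1) := by
      have : C k4 * (g1 * h1) = (g * h) * (C lg⁻¹ * C lh⁻¹ * C (lg * lh)) := by
        rw [← hlglh, hg1def, hh1def]
        ring
      rw [hgh, this, hC1, mul_one]
    set a := g1.coeff 1
    set b := g1.coeff 0
    set c := h1.coeff 1
    set d := h1.coeff 0
    have hgexp : g1 = X ^ 2 + C a * X + C b := aux_monicQuad hg1m hg1d
    have hhexp : h1 = X ^ 2 + C c * X + C d := aux_monicQuad hh1m hh1d
    rw [hgexp, hhexp] at key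
    have expand : (C k4 : K[X]) * ((X ^ 2 + C a * X + C b) * (X ^ 2 + C c * X + C d))
        = C k4 * X ^ 4 + C (k4 * (a + c)) * X ^ 3 + C (k4 * (a * c + b + d)) * X ^ 2
          + C (k4 * (a * d + b * c)) * X + C (k4 * (b * d)) := by
      simp only [C_mul, C_add]
      ring
    rw [expand] at key
    have e3 : k4 * (a + c) = 0 := by
      have := congrArg (fun p => Polynomial.coeff p 3) key
      simp only [coeff_add, coeff_C_mul, coeff_X_pow, coeff_X, coeff_C] at this
      simpa using this.symm
    have e2 : k4 * (a * c + b + d) = k2 := by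
      have := congrArg (fun p => Polynomial.coeff p 2) key
      simp only [coeff_add, coeff_C_mul, coeff_X_pow, coeff_X, coeff_C] at this
      simpa using this.symm
    have e1 : k4 * (a * d + b * c) = 0 := by
      have := congrArg (fun p => Polynomial.coeff p 1) key
      simp only [coeff_add, coeff_C_mul, coeff_X_pow, coeff_X, coeff_C] at this
      simpa using this.symm
    have e0 : k4 * (b * d) = k0 := by
      have := congrArg (fun p => Polynomial.coeff p 0) key
      simp only [coeff_add, coeff_C_mul, coeff_X_pow, coeff_X, coeff_C] at this
      simpa using this.symm
    have hc : c = -a := by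
      rcases mul_eq_zero.mp e3 with h' | h'
      · exact absurd h' hk4
      · linear_combination h'
    rw [hc] at e2 e1
    have hadb : a * (d - b) = 0 := by
      rcases mul_eq_zero.mp e1 with h' | h'
      · exact absurd h' hk4
      · linear_combination h'
    rcases mul_eq_zero.mp hadb with ha0 | hdb
    · rw [ha0] at e2
      refine Or.inl ⟨k4 * (b - d), ?_⟩
      linear_combination (k4 * (b + d) + k2) * e2 - 4 * k4 * e0
    · have hdb' : d = b := by linear_combination hdb
      rw [hdb'] at e0
      exact Or.inr ⟨k4 * b, by linear_combination k4 * e0⟩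
  · -- degree 3: h has degree 1
    have hdh : h.natDegree = 1 := by omega
    exact Or.inl (aux_degOneCase k4 k2 k0 h g (hgh.trans (mul_comm g h)) hdh)

lemma aux_natDegree_pos_of_factor {R : Type*} [CommRing R] [IsDomain R]
    (q G H : Polynomial R) (hGH : q = G * H) (hGnu : ¬ IsUnit G)
    (hprim : ∀ r : R, (∀ n, r ∣ q.coeff n) → IsUnit r) : 1 ≤ G.natDegree := by
  rcases Nat.eq_zero_or_pos G.natDegree with h0 | h0
  · exfalso
    apply hGnu
    have hGC : G = Polynomial.C (G.coeff 0) := Polynomial.eq_C_of_natDegree_eq_zero h0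
    have hu : IsUnit (G.coeff 0) := hprim _ (fun n =>
      ⟨H.coeff n, by
        conv_lhs => rw [hGH, hGC]
        exact Polynomial.coeff_C_mul H⟩)
    rw [hGC]
    exact Polynomial.isUnit_C.mpr hu
  · exact h0

end PolyAux

section MvAux

open MvPolynomial Polynomial

variable {k : Type*} [Field k]

lemma aux_primeX0 : Prime (MvPolynomial.X 0 : MvPolynomial (Fin 2) k) := by
  rw [← MulEquiv.prime_iff (MvPolynomial.finSuccEquiv k 1).toMulEquiv]
  show Prime ((MvPolynomial.finSuccEquiv k 1) (MvPolynomial.X 0))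
  rw [finSuccEquiv_X_zero]
  exact Polynomial.prime_X

lemma aux_primeX0' : Prime (MvPolynomial.X 0 : MvPolynomial (Fin 1) k) := by
  rw [← MulEquiv.prime_iff (MvPolynomial.finSuccEquiv k 0).toMulEquiv]
  show Prime ((MvPolynomial.finSuccEquiv k 0) (MvPolynomial.X 0))
  rw [finSuccEquiv_X_zero]
  exact Polynomial.prime_X

lemma aux_primeX1 : Prime (MvPolynomial.X 1 : MvPolynomial (Fin 2) k) := by
  have h : (MvPolynomial.X 1 : MvPolynomial (Fin 2) k) = MvPolynomial.X (Fin.succ 0) := by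
    rw [Fin.succ_zero_eq_one]
  rw [h, ← MulEquiv.prime_iff (MvPolynomial.finSuccEquiv k 1).toMulEquiv]
  show Prime ((MvPolynomial.finSuccEquiv k 1) (MvPolynomial.X (Fin.succ 0)))
  rw [finSuccEquiv_X_succ]
  exact Polynomial.prime_C_iff.mpr aux_primeX0'

set_option synthInstance.maxHeartbeats 1000000 in
set_option maxHeartbeats 1000000 in
lemma aux_sq_transfer (r : MvPolynomial (Fin 2) k)
    (x : FractionRing (MvPolynomial (Fin 2) k))
    (h : x ^ 2 = algebraMap (MvPolynomial (Fin 2) k) _ r) :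
    ∃ s : MvPolynomial (Fin 2) k, s ^ 2 = r := by
  have hint : IsIntegral (MvPolynomial (Fin 2) k) x := by
    refine ⟨Polynomial.X ^ 2 - Polynomial.C r, monic_X_pow_sub_C r (by norm_num), ?_⟩
    simp [h]
  obtain ⟨y, hy⟩ := IsIntegrallyClosed.isIntegral_iff.mp hint
  refine ⟨y, IsFractionRing.injective (MvPolynomial (Fin 2) k)
    (FractionRing (MvPolynomial (Fin 2) k)) ?_⟩
  rw [map_pow, hy, h]

lemma aux_fse_compute (t : k) : (MvPolynomial.finSuccEquiv k 2) ((X 0 ^ 2 + X 1 ^ 2 + X 2 ^ 2) ^ 2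
        - MvPolynomial.C t * (X 0 ^ 4 + X 1 ^ 4 + X 2 ^ 4) : MvPolynomial (Fin 3) k)
    = Polynomial.C (MvPolynomial.C (1 - t)) * Polynomial.X ^ 4
      + Polynomial.C (MvPolynomial.C 2 * (X 0 ^ 2 + X 1 ^ 2)) * Polynomial.X ^ 2
      + Polynomial.C ((X 0 ^ 2 + X 1 ^ 2) ^ 2 - MvPolynomial.C t * (X 0 ^ 4 + X 1 ^ 4)) := by
  have h1 : (X 1 : MvPolynomial (Fin 3) k) = X (Fin.succ 0) := by rw [Fin.succ_zero_eq_one]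
  have h2 : (X 2 : MvPolynomial (Fin 3) k) = X (Fin.succ 1) := by rw [Fin.succ_one_eq_two]
  have hC : (MvPolynomial.finSuccEquiv k 2) (MvPolynomial.C t)
      = Polynomial.C (MvPolynomial.C t) := by
    simp [finSuccEquiv_apply]
  rw [h1, h2]
  simp only [map_sub, map_add, map_mul, map_pow, finSuccEquiv_X_zero, finSuccEquiv_X_succ, hC]
  simp only [map_sub, map_add, map_mul, map_pow, map_one, map_ofNat]
  ring

lemma aux_unit_of_dvd_both (h2 : (2:k) ≠ 0) (r : MvPolynomial (Fin 2) k)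
    (ha : r ∣ MvPolynomial.C 2 * (MvPolynomial.X 0 ^ 2 + MvPolynomial.X 1 ^ 2))
    (hb : r ∣ MvPolynomial.C 2 * (MvPolynomial.X 0 ^ 2 * MvPolynomial.X 1 ^ 2)) :
    IsUnit r := by
  by_contra hru
  have hC2u : IsUnit (MvPolynomial.C (2:k) : MvPolynomial (Fin 2) k) :=
    (isUnit_iff_ne_zero.mpr h2).map (MvPolynomial.C : k →+* MvPolynomial (Fin 2) k)
  have hr0 : r ≠ 0 := by
    intro h0
    rw [h0] at hb
    have hz := zero_dvd_iff.mp hb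
    have := congrArg (MvPolynomial.aeval (![Polynomial.X, 1] : Fin 2 → Polynomial k)) hz
    simp only [map_mul, map_add, map_pow, MvPolynomial.aeval_X, map_zero,
      MvPolynomial.aeval_C, Matrix.cons_val_zero, Matrix.cons_val_one, Matrix.head_cons,
      one_pow, mul_one] at this
    have h4 := congrArg (fun p => Polynomial.coeff p 2) this
    simp [Polynomial.coeff_X_pow, Polynomial.algebraMap_eq] at h4
    exact h2 h4
  obtain ⟨p, hpirr, hpr⟩ := WfDvdMonoid.exists_irreducible_factor hru hr0
  have hp : Prime p := UniqueFactorizationMonoid.irreducible_iff_prime.mp hpirr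
  have hpb : p ∣ MvPolynomial.C 2 * (MvPolynomial.X 0 ^ 2 * MvPolynomial.X 1 ^ 2) :=
    dvd_trans hpr hb
  have hpa : p ∣ (MvPolynomial.X 0 ^ 2 + MvPolynomial.X 1 ^ 2 :
      MvPolynomial (Fin 2) k) := by
    rcases hp.dvd_or_dvd (dvd_trans hpr ha) with h' | h'
    · exact absurd (isUnit_of_dvd_unit h' hC2u) hp.not_unit
    · exact h'
  have hx01 : p ∣ (MvPolynomial.X 0 : MvPolynomial (Fin 2) k)
      ∧ p ∣ (MvPolynomial.X 1 : MvPolynomial (Fin 2) k) ∨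
      p ∣ (MvPolynomial.X 1 : MvPolynomial (Fin 2) k)
      ∧ p ∣ (MvPolynomial.X 0 : MvPolynomial (Fin 2) k) := by
    rcases hp.dvd_or_dvd hpb with h' | h'
    · exact absurd (isUnit_of_dvd_unit h' hC2u) hp.not_unit
    · rcases hp.dvd_or_dvd h' with h'' | h''
      · left
        have hx0 : p ∣ (MvPolynomial.X 0 : MvPolynomial (Fin 2) k) := hp.dvd_of_dvd_pow h''
        refine ⟨hx0, hp.dvd_of_dvd_pow (n := 2) ?_⟩
        have : (MvPolynomial.X 1 ^ 2 : MvPolynomial (Fin 2) k)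
            = (MvPolynomial.X 0 ^ 2 + MvPolynomial.X 1 ^ 2) - MvPolynomial.X 0 ^ 2 := by ring
        rw [this]
        exact dvd_sub hpa (dvd_pow hx0 (by norm_num))
      · right
        have hx1 : p ∣ (MvPolynomial.X 1 : MvPolynomial (Fin 2) k) := hp.dvd_of_dvd_pow h''
        refine ⟨hx1, hp.dvd_of_dvd_pow (n := 2) ?_⟩
        have : (MvPolynomial.X 0 ^ 2 : MvPolynomial (Fin 2) k)
            = (MvPolynomial.X 0 ^ 2 + MvPolynomial.X 1 ^ 2) - MvPolynomial.X 1 ^ 2 := by ring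
        rw [this]
        exact dvd_sub hpa (dvd_pow hx1 (by norm_num))
  have hdvd01 : (MvPolynomial.X 0 : MvPolynomial (Fin 2) k) ∣ MvPolynomial.X 1 ∨
      (MvPolynomial.X 1 : MvPolynomial (Fin 2) k) ∣ MvPolynomial.X 0 := by
    rcases hx01 with ⟨h0, h1⟩ | ⟨h1, h0⟩
    · left
      exact dvd_trans ((hpirr.associated_of_dvd aux_primeX0.irreducible h0).symm.dvd) h1
    · right
      exact dvd_trans ((hpirr.associated_of_dvd aux_primeX1.irreducible h1).symm.dvd) h0
  rcases hdvd01 with ⟨w, hw⟩ | ⟨w, hw⟩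
  · have := congrArg (MvPolynomial.aeval (![0, 1] : Fin 2 → k)) hw
    simp at this
  · have := congrArg (MvPolynomial.aeval (![1, 0] : Fin 2 → k)) hw
    simp at this

end MvAux

open MvPolynomial

set_option maxHeartbeats 1000000 in
/-- For a field `k` with `char k ≠ 2` and `t ∉ {0, 2}`, the polynomial
`f = (x₁²+x₂²+x₃²)² - t(x₁⁴+x₂⁴+x₃⁴)` is reducible iff `t = 3` and `k` contains a
primitive third root of unity. -/
theorem stmt_13 (k : Type*) [Field k] (hchar : ringChar k ≠ 2)
    (t : k) (ht : t ≠ 0) (ht2 : t ≠ 2) :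
    ¬ Irreducible ((X 0 ^ 2 + X 1 ^ 2 + X 2 ^ 2) ^ 2
        - C t * (X 0 ^ 4 + X 1 ^ 4 + X 2 ^ 4) : MvPolynomial (Fin 3) k) ↔
      t = 3 ∧ ∃ ω : k, IsPrimitiveRoot ω 3 := by
  have h2 : (2:k) ≠ 0 := by
    intro h
    have hd : ringChar k ∣ 2 := by
      have h' : ((2:ℕ):k) = 0 := by exact_mod_cast h
      exact (CharP.cast_eq_zero_iff k (ringChar k) 2).mp h'
    rcases (Nat.prime_two.eq_one_or_self_of_dvd _ hd) with h1 | h1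
    · have : ((1:ℕ):k) = 0 := by
        rw [CharP.cast_eq_zero_iff k (ringChar k) 1, h1]
      simpa using this
    · exact hchar h1
  have h4 : (4:k) ≠ 0 := by
    intro h
    apply h2
    have h' : (2:k) * 2 = 0 := by linear_combination h
    rcases mul_eq_zero.mp h' with h'' | h'' <;> exact h''
  constructor
  · -- hard direction
    intro hred
    set c4 : MvPolynomial (Fin 2) k := MvPolynomial.C (1 - t) with hc4def
    set cq : MvPolynomial (Fin 2) k := MvPolynomial.C 2 * (X 0 ^ 2 + X 1 ^ 2) with hcqdef
    set cz : MvPolynomial (Fin 2) k :=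
      (X 0 ^ 2 + X 1 ^ 2) ^ 2 - MvPolynomial.C t * (X 0 ^ 4 + X 1 ^ 4) with hczdef
    have hF : (MvPolynomial.finSuccEquiv k 2) ((X 0 ^ 2 + X 1 ^ 2 + X 2 ^ 2) ^ 2
        - C t * (X 0 ^ 4 + X 1 ^ 4 + X 2 ^ 4) : MvPolynomial (Fin 3) k)
        = Polynomial.C c4 * Polynomial.X ^ 4 + Polynomial.C cq * Polynomial.X ^ 2
          + Polynomial.C cz := aux_fse_compute t
    have hcq_ne : cq ≠ 0 := by
      intro hz
      rw [hcqdef] at hz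
      have h' := congrArg (MvPolynomial.eval (![1, 0] : Fin 2 → k)) hz
      simp at h'
      exact h2 h'
    have hnotu : ¬ IsUnit ((X 0 ^ 2 + X 1 ^ 2 + X 2 ^ 2) ^ 2
        - C t * (X 0 ^ 4 + X 1 ^ 4 + X 2 ^ 4) : MvPolynomial (Fin 3) k) := by
      intro hu
      have hu2 := hu.map (MvPolynomial.finSuccEquiv k 2)
      rw [hF] at hu2
      have hdeg0 := Polynomial.natDegree_eq_zero_of_isUnit hu2
      have hcoe : (Polynomial.C c4 * Polynomial.X ^ 4 + Polynomial.C cq * Polynomial.X ^ 2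
          + Polynomial.C cz).coeff 2 = 0 :=
        Polynomial.coeff_eq_zero_of_natDegree_lt (by omega)
      apply hcq_ne
      simpa [Polynomial.coeff_add, Polynomial.coeff_C_mul, Polynomial.coeff_X_pow,
        Polynomial.coeff_C] using hcoe
    rw [irreducible_iff] at hred
    push_neg at hred
    obtain ⟨ga, gb, hab, hganu, hgbnu⟩ := by
      have := hred hnotu
      exact this
    set G := (MvPolynomial.finSuccEquiv k 2) ga with hGdef
    set H := (MvPolynomial.finSuccEquiv k 2) gb with hHdef
    have hGH : Polynomial.C c4 * Polynomial.X ^ 4 + Polynomial.C cq * Polynomial.X ^ 2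
        + Polynomial.C cz = G * H := by
      rw [hGdef, hHdef, ← map_mul, ← hab, hF]
    have hGnu : ¬ IsUnit G := by
      intro hu
      apply hganu
      have := hu.map (MvPolynomial.finSuccEquiv k 2).symm
      rwa [hGdef, AlgEquiv.symm_apply_apply] at this
    have hHnu : ¬ IsUnit H := by
      intro hu
      apply hgbnu
      have := hu.map (MvPolynomial.finSuccEquiv k 2).symm
      rwa [hHdef, AlgEquiv.symm_apply_apply] at this
    set φ := algebraMap (MvPolynomial (Fin 2) k)
      (FractionRing (MvPolynomial (Fin 2) k)) with hφdef
    have hinj : Function.Injective φ :=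
      IsFractionRing.injective (MvPolynomial (Fin 2) k)
        (FractionRing (MvPolynomial (Fin 2) k))
    by_cases ht1 : t = 1
    · exfalso
      subst ht1
      have hc4z : c4 = 0 := by rw [hc4def]; simp
      have hcz' : cz = MvPolynomial.C 2 * (X 0 ^ 2 * X 1 ^ 2) := by
        rw [hczdef]
        simp only [map_one, one_mul, map_ofNat]
        ring
      rw [hc4z] at hGH
      simp only [map_zero, zero_mul, zero_add] at hGH
      have hq2deg : (Polynomial.C cq * Polynomial.X ^ 2 + Polynomial.C cz).natDegree = 2 := by
        compute_degree!
      have hqne : (Polynomial.C cq * Polynomial.X ^ 2 + Polynomial.C cz) ≠ 0 := by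
        intro hz
        rw [hz] at hq2deg
        simp at hq2deg
      have hG0 : G ≠ 0 := fun hz => hqne (by rw [hGH, hz, zero_mul])
      have hH0 : H ≠ 0 := fun hz => hqne (by rw [hGH, hz, mul_zero])
      have hsum2 : G.natDegree + H.natDegree = 2 := by
        have hh := hq2deg
        rw [hGH, Polynomial.natDegree_mul hG0 hH0] at hh
        exact hh
      have hprim : ∀ r : MvPolynomial (Fin 2) k,
          (∀ n, r ∣ (Polynomial.C cq * Polynomial.X ^ 2 + Polynomial.C cz).coeff n) →
          IsUnit r := by
        intro r hr
        have hr2 := hr 2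
        have hr0 := hr 0
        have hco2 : (Polynomial.C cq * Polynomial.X ^ 2 + Polynomial.C cz).coeff 2 = cq := by
          simp [Polynomial.coeff_X_pow, Polynomial.coeff_C]
        have hco0 : (Polynomial.C cq * Polynomial.X ^ 2 + Polynomial.C cz).coeff 0 = cz := by
          simp
        rw [hco2] at hr2
        rw [hco0] at hr0
        rw [hcqdef] at hr2
        rw [hcz'] at hr0
        exact aux_unit_of_dvd_both h2 r hr2 hr0
      have hdG : 1 ≤ G.natDegree := aux_natDegree_pos_of_factor _ G H hGH hGnu hprim
      have hdH : 1 ≤ H.natDegree :=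
        aux_natDegree_pos_of_factor _ H G (hGH.trans (mul_comm G H)) hHnu hprim
      have hdG1 : G.natDegree = 1 := by omega
      have hGHK : Polynomial.C (φ cq) * Polynomial.X ^ 2 + Polynomial.C (φ cz)
          = G.map φ * H.map φ := by
        have := congrArg (Polynomial.map φ) hGH
        simpa [Polynomial.map_add, Polynomial.map_mul, Polynomial.map_pow,
          Polynomial.map_C, Polynomial.map_X] using this
      have hdGK : (G.map φ).natDegree = 1 := by
        rw [Polynomial.natDegree_map_eq_of_injective hinj, hdG1]
      obtain ⟨u, hu⟩ := aux_degTwoCase (φ cq) (φ cz) (G.map φ) (H.map φ) hGHK hdGK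
      have hu' : u ^ 2 = φ (-(cq * cz)) := by
        rw [hu]
        simp [map_neg, map_mul]
      obtain ⟨s, hs⟩ := aux_sq_transfer _ u hu'
      have hpush := congrArg (MvPolynomial.aeval (![Polynomial.X, 1] : Fin 2 → Polynomial k)) hs
      rw [map_pow] at hpush
      have hrhs : (MvPolynomial.aeval (![Polynomial.X, 1] : Fin 2 → Polynomial k)) (-(cq * cz))
          = Polynomial.C (-4 : k) * Polynomial.X ^ 4 + Polynomial.C (-4 : k) * Polynomial.X ^ 2
            + Polynomial.C (0 : k) := by
        rw [hcqdef, hcz']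
        simp only [map_neg, map_mul, map_add, map_pow, map_one, map_ofNat, map_zero,
          MvPolynomial.aeval_X, Matrix.cons_val_zero, Matrix.cons_val_one, Matrix.head_cons,
          Polynomial.algebraMap_eq]
        ring
      rw [hrhs] at hpush
      obtain ⟨c2', c0', he4, he0, heprod⟩ := aux_cube_expand _ h2 _ _ _
        (show (-4:k) ≠ 0 from neg_ne_zero.mpr h4) hpush
      have hc0z : c0' = 0 := by
        rw [pow_eq_zero_iff (by norm_num : (2:ℕ) ≠ 0)] at he0
        exact he0
      rw [hc0z] at heprod
      apply h4
      linear_combination heprod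
    · -- t ≠ 1
      have h1t : (1:k) - t ≠ 0 := sub_ne_zero.mpr (fun hh => ht1 hh.symm)
      have hc4ne : c4 ≠ 0 := by
        rw [hc4def, Ne, MvPolynomial.C_eq_zero]
        exact h1t
      have hc4u : IsUnit c4 := by
        rw [hc4def]
        exact (isUnit_iff_ne_zero.mpr h1t).map
          (MvPolynomial.C : k →+* MvPolynomial (Fin 2) k)
      have hprim : ∀ r : MvPolynomial (Fin 2) k,
          (∀ n, r ∣ (Polynomial.C c4 * Polynomial.X ^ 4 + Polynomial.C cq * Polynomial.X ^ 2
            + Polynomial.C cz).coeff n) → IsUnit r := by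
        intro r hr
        have hr4 := hr 4
        have hco4 : (Polynomial.C c4 * Polynomial.X ^ 4 + Polynomial.C cq * Polynomial.X ^ 2
            + Polynomial.C cz).coeff 4 = c4 := by
          simp [Polynomial.coeff_X_pow, Polynomial.coeff_C]
        rw [hco4] at hr4
        exact isUnit_of_dvd_unit hr4 hc4u
      have hdG : 1 ≤ G.natDegree := aux_natDegree_pos_of_factor _ G H hGH hGnu hprim
      have hdH : 1 ≤ H.natDegree :=
        aux_natDegree_pos_of_factor _ H G (hGH.trans (mul_comm G H)) hHnu hprim
      have hGHK : Polynomial.C (φ c4) * Polynomial.X ^ 4 + Polynomial.C (φ cq) * Polynomial.X ^ 2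
          + Polynomial.C (φ cz) = G.map φ * H.map φ := by
        have := congrArg (Polynomial.map φ) hGH
        simpa [Polynomial.map_add, Polynomial.map_mul, Polynomial.map_pow,
          Polynomial.map_C, Polynomial.map_X] using this
      have hGKnu : ¬ IsUnit (G.map φ) := by
        intro hu
        have hd := Polynomial.natDegree_eq_zero_of_isUnit hu
        rw [Polynomial.natDegree_map_eq_of_injective hinj] at hd
        omega
      have hHKnu : ¬ IsUnit (H.map φ) := by
        intro hu
        have hd := Polynomial.natDegree_eq_zero_of_isUnit hu
        rw [Polynomial.natDegree_map_eq_of_injective hinj] at hd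
        omega
      have hφc4 : φ c4 ≠ 0 := fun hz => hc4ne (hinj (by rw [hz, map_zero]))
      rcases aux_quartic_factor (φ c4) (φ cq) (φ cz) hφc4 _ _ hGHK hGKnu hHKnu with
        ⟨u, hu⟩ | ⟨v, hv⟩
      · -- discriminant square: t = 3 and ω exists
        have hu' : u ^ 2 = φ (cq ^ 2 - 4 * (c4 * cz)) := by
          rw [hu]
          simp [map_sub, map_pow, map_mul, map_ofNat]
        obtain ⟨s, hs⟩ := aux_sq_transfer _ u hu'
        have hpush := congrArg
          (MvPolynomial.aeval (![Polynomial.X, 1] : Fin 2 → Polynomial k)) hs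
        rw [map_pow] at hpush
        have hrhs : (MvPolynomial.aeval (![Polynomial.X, 1] : Fin 2 → Polynomial k))
            (cq ^ 2 - 4 * (c4 * cz))
            = Polynomial.C (4*t*(2-t)) * Polynomial.X ^ 4 + Polynomial.C (8*t) * Polynomial.X ^ 2
              + Polynomial.C (4*t*(2-t)) := by
          rw [hcqdef, hc4def, hczdef]
          simp only [map_sub, map_mul, map_add, map_pow, map_one, map_ofNat,
            MvPolynomial.aeval_X, Matrix.cons_val_zero, Matrix.cons_val_one, Matrix.head_cons,
            Polynomial.algebraMap_eq, MvPolynomial.aeval_C]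
          ring
        rw [hrhs] at hpush
        have he4ne : (4*t*(2-t) : k) ≠ 0 :=
          mul_ne_zero (mul_ne_zero h4 ht) (sub_ne_zero.mpr (fun hh => ht2 hh.symm))
        obtain ⟨c2', c0', e1', e2', e3'⟩ := aux_cube_expand _ h2 _ _ _ he4ne hpush
        have hAB : c2'^2 * c0'^2 = (4*t*(2-t))^2 := by
          linear_combination (c0'^2) * e1' + (4*t*(2-t)) * e2'
        have hCD : 4*(c2'^2 * c0'^2) = 64*t^2 := by
          linear_combination (2*(c2'*c0') + 8*t) * e3'
        have h64 : (64:k) * t^2 * ((2-t)^2 - 1) = 0 := by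
          linear_combination hCD - 4*hAB
        have h13 : (t-1)*(t-3) = 0 := by
          rcases mul_eq_zero.mp h64 with h' | h'
          · exfalso
            rcases mul_eq_zero.mp h' with h'' | h''
            · have h64ne : (64:k) ≠ 0 := by
                have he : (64:k) = 2^6 := by norm_num
                rw [he]
                exact pow_ne_zero _ h2
              exact h64ne h''
            · exact pow_ne_zero _ ht h''
          · linear_combination h'
        have ht3 : t = 3 := by
          rcases mul_eq_zero.mp h13 with h' | h'
          · exact absurd (by linear_combination h' : t = 1) ht1
          · linear_combination h'
        refine ⟨ht3, ?_⟩
        have hc2m : c2'^2 = -12 := by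
          rw [ht3] at e1'
          linear_combination e1'
        have h3ne : (3:k) ≠ 0 := ht3 ▸ ht
        set ω := (c2' - 2)/4 with hω
        have hωsum : ω^2 + ω + 1 = 0 := by
          have hinv : (4:k) * (4:k)⁻¹ = 1 := mul_inv_cancel₀ h4
          rw [hω, div_eq_mul_inv]
          linear_combination (((4:k)⁻¹)^2) * hc2m + (((-2:k) - c2')*(4:k)⁻¹ - 1) * hinv
        have hωne : ω ≠ 1 := by
          intro hh
          rw [hh] at hωsum
          exact h3ne (by linear_combination hωsum)
        have hω3 : ω^3 = 1 := by linear_combination (ω - 1) * hωsum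
        have hord : orderOf ω = 3 := by
          have hdvd : orderOf ω ∣ 3 := orderOf_dvd_of_pow_eq_one hω3
          rcases (Nat.prime_three.eq_one_or_self_of_dvd _ hdvd) with h' | h'
          · exact absurd (orderOf_eq_one_iff.mp h') hωne
          · exact h'
        exact ⟨ω, hord ▸ IsPrimitiveRoot.orderOf ω⟩
      · -- constant-term square: contradiction
        exfalso
        have hv' : v ^ 2 = φ (c4 * cz) := by
          rw [hv]
          simp [map_mul]
        obtain ⟨s, hs⟩ := aux_sq_transfer _ v hv'
        have hpush := congrArg
          (MvPolynomial.aeval (![Polynomial.X, 1] : Fin 2 → Polynomial k)) hs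
        rw [map_pow] at hpush
        have hrhs : (MvPolynomial.aeval (![Polynomial.X, 1] : Fin 2 → Polynomial k)) (c4 * cz)
            = Polynomial.C ((1-t)^2) * Polynomial.X ^ 4
              + Polynomial.C (2*(1-t)) * Polynomial.X ^ 2 + Polynomial.C ((1-t)^2) := by
          rw [hc4def, hczdef]
          simp only [map_sub, map_mul, map_add, map_pow, map_one, map_ofNat,
            MvPolynomial.aeval_X, Matrix.cons_val_zero, Matrix.cons_val_one, Matrix.head_cons,
            Polynomial.algebraMap_eq, MvPolynomial.aeval_C]
          ring
        rw [hrhs] at hpush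
        have he4ne : ((1-t)^2 : k) ≠ 0 := pow_ne_zero _ h1t
        obtain ⟨c2', c0', e1', e2', e3'⟩ := aux_cube_expand _ h2 _ _ _ he4ne hpush
        have hAB : c2'^2 * c0'^2 = (1-t)^4 := by
          linear_combination (c0'^2) * e1' + ((1-t)^2) * e2'
        have hCD : 4*(c2'^2 * c0'^2) = 4*(1-t)^2 := by
          linear_combination (2*(c2'*c0') + 2*(1-t)) * e3'
        have hpoly : (4:k)*(1-t)^2*((1-t)^2 - 1) = 0 := by
          linear_combination hCD - 4*hAB
        rcases mul_eq_zero.mp hpoly with h' | h'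
        · rcases mul_eq_zero.mp h' with h'' | h''
          · exact h4 h''
          · exact he4ne h''
        · have htt : t*(t-2) = 0 := by linear_combination h'
          rcases mul_eq_zero.mp htt with h'' | h''
          · exact ht h''
          · exact ht2 (by linear_combination h'')
  · -- easy direction
    rintro ⟨ht3, ω, hω⟩ hirr
    subst ht3
    have hω3 : ω^3 = 1 := hω.pow_eq_one
    have hωne : ω ≠ 1 := by
      intro hh
      rw [hh] at hω
      have := hω.dvd_of_pow_eq_one 1 (by simp)
      norm_num at this
    have hωsum : ω^2 + ω + 1 = 0 := by
      rcases mul_eq_zero.mp (show (ω-1)*(ω^2+ω+1) = 0 by linear_combination hω3) with h' | h'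
      · exact absurd (by linear_combination h' : ω = 1) hωne
      · exact h'
    have hC : (C ω : MvPolynomial (Fin 3) k)^2 + C ω + 1 = 0 := by
      have hc : C (ω^2+ω+1) = (C (0:k) : MvPolynomial (Fin 3) k) := by rw [hωsum]
      simpa [map_add, map_pow, map_one, map_zero] using hc
    have hfac : ((X 0 ^ 2 + X 1 ^ 2 + X 2 ^ 2) ^ 2
        - C (3:k) * (X 0 ^ 4 + X 1 ^ 4 + X 2 ^ 4) : MvPolynomial (Fin 3) k)
        = (C (-2:k) * (X 0^2 + C ω * X 1^2 + (C ω)^2 * X 2^2))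
          * (X 0^2 + (C ω)^2 * X 1^2 + C ω * X 2^2) := by
      have h3C : (C (3:k) : MvPolynomial (Fin 3) k) = 3 := map_ofNat _ 3
      have hm2 : (C (-2:k) : MvPolynomial (Fin 3) k) = -2 := by
        rw [map_neg, map_ofNat]
      rw [h3C, hm2]
      linear_combination (2*(C ω - 1)*(X 1^4 + X 2^4) + 2*(X 0^2*X 1^2 + X 0^2*X 2^2)
        + 2*((C ω)^2 - C ω + 1)*(X 1^2*X 2^2)) * hC
    rcases hirr.isUnit_or_isUnit hfac with hu | hu
    · have hA : IsUnit (X 0^2 + C ω * X 1^2 + (C ω)^2 * X 2^2 : MvPolynomial (Fin 3) k) :=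
        isUnit_of_mul_isUnit_right hu
      have hmap := hA.map (MvPolynomial.aeval (![Polynomial.X, 0, 0] : Fin 3 → Polynomial k))
      have himg : (MvPolynomial.aeval (![Polynomial.X, 0, 0] : Fin 3 → Polynomial k))
          (X 0^2 + C ω * X 1^2 + (C ω)^2 * X 2^2) = Polynomial.X^2 := by
        simp
      rw [himg] at hmap
      have hd := Polynomial.natDegree_eq_zero_of_isUnit hmap
      simp [Polynomial.natDegree_pow, Polynomial.natDegree_X] at hd
    · have hmap := hu.map (MvPolynomial.aeval (![Polynomial.X, 0, 0] : Fin 3 → Polynomial k))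
      have himg : (MvPolynomial.aeval (![Polynomial.X, 0, 0] : Fin 3 → Polynomial k))
          (X 0^2 + (C ω)^2 * X 1^2 + C ω * X 2^2) = Polynomial.X^2 := by
        simp
      rw [himg] at hmap
      have hd := Polynomial.natDegree_eq_zero_of_isUnit hmap
      simp [Polynomial.natDegree_pow, Polynomial.natDegree_X] at hd
end
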